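/- Let w : [0,1] × [0,T] → [0,∞) be C¹ in the first variable with w and |∂w/∂y| bounded by R on [0,1]×[0,T]. For x, y ∈ [0,1) and t ∈ [0,T], ∫_0^∞ |x·1_{[0,w(x,t))}(ξ) − y·1_{[0,w(y,t))}(ξ)|² dξ ≤ C |x − y| for a constant C depending only on R. -/

import Mathlib

open Set MeasureTheory

lemma stmt_12_aux (a b x y : ℝ) (ha : 0 ≤ a) (hab : a ≤ b) :
    (∫ ξ in Ioi (0:ℝ),
      (x * (Ico (0:ℝ) a).indicator (fun _ => (1:ℝ)) ξ
        - y * (Ico (0:ℝ) b).indicator (fun _ => (1:ℝ)) ξ) ^ 2)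
      ≤ (x - y)^2 * a + y^2 * (b - a) := by
  have heq : ∀ ξ : ℝ,
      (x * (Ico (0:ℝ) a).indicator (fun _ => (1:ℝ)) ξ
        - y * (Ico (0:ℝ) b).indicator (fun _ => (1:ℝ)) ξ) ^ 2
      = (Ico (0:ℝ) a).indicator (fun _ => (x - y)^2) ξ
        + (Ico a b).indicator (fun _ => y^2) ξ := by
    intro ξ
    by_cases h1 : ξ ∈ Ico (0:ℝ) a
    · have h2 : ξ ∈ Ico (0:ℝ) b := ⟨h1.1, lt_of_lt_of_le h1.2 hab⟩
      have h3 : ξ ∉ Ico a b := fun h => absurd h1.2 (not_lt.2 h.1)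
      simp [indicator_of_mem, h1, h2, h3]
    · by_cases h2 : ξ ∈ Ico (0:ℝ) b
      · have h3 : ξ ∈ Ico a b := ⟨by by_contra h; exact h1 ⟨h2.1, lt_of_not_ge h⟩, h2.2⟩
        simp [h1, h2, h3]
      · have h3 : ξ ∉ Ico a b := fun h => h2 ⟨le_trans ha h.1, h.2⟩
        simp [h1, h2, h3]
  have hi1 : Integrable ((Ico (0:ℝ) a).indicator (fun _ => (x - y)^2)) :=
    (IntegrableOn.integrable_indicator
      (integrableOn_const measure_Ico_lt_top.ne) measurableSet_Ico)
  have hi2 : Integrable ((Ico a b).indicator (fun _ => y^2)) :=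
    (IntegrableOn.integrable_indicator
      (integrableOn_const measure_Ico_lt_top.ne) measurableSet_Ico)
  have hint : Integrable (fun ξ =>
      (Ico (0:ℝ) a).indicator (fun _ => (x - y)^2) ξ
        + (Ico a b).indicator (fun _ => y^2) ξ) := hi1.add hi2
  calc (∫ ξ in Ioi (0:ℝ),
      (x * (Ico (0:ℝ) a).indicator (fun _ => (1:ℝ)) ξ
        - y * (Ico (0:ℝ) b).indicator (fun _ => (1:ℝ)) ξ) ^ 2)
      = ∫ ξ in Ioi (0:ℝ),
        ((Ico (0:ℝ) a).indicator (fun _ => (x - y)^2) ξ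
          + (Ico a b).indicator (fun _ => y^2) ξ) := by
        exact integral_congr_ae (Filter.Eventually.of_forall fun ξ => heq ξ)
    _ ≤ ∫ ξ, ((Ico (0:ℝ) a).indicator (fun _ => (x - y)^2) ξ
          + (Ico a b).indicator (fun _ => y^2) ξ) := by
        apply setIntegral_le_integral hint
        apply Filter.Eventually.of_forall
        intro ξ
        apply add_nonneg <;> apply indicator_nonneg <;> intro _ _ <;> positivity
    _ = (x - y)^2 * a + y^2 * (b - a) := by
        rw [integral_add hi1 hi2, integral_indicator_const _ measurableSet_Ico,
          integral_indicator_const _ measurableSet_Ico]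
        simp [Real.volume_Ico, ENNReal.toReal_ofReal, ha, hab, sub_zero,
          ENNReal.toReal_ofReal (sub_nonneg.2 hab)]
        ring

theorem stmt_12 (T R : ℝ) (hT : 0 < T) (hR : 0 < R)
    (w wy : ℝ → ℝ → ℝ)
    (hderiv : ∀ t ∈ Icc (0:ℝ) T, ∀ y : ℝ, HasDerivAt (fun y => w y t) (wy y t) y)
    (hwn : ∀ y t, 0 ≤ w y t)
    (hbd : ∀ y ∈ Icc (0:ℝ) 1, ∀ t ∈ Icc (0:ℝ) T, w y t ≤ R ∧ |wy y t| ≤ R) :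
    ∃ C > (0:ℝ), ∀ x ∈ Ico (0:ℝ) 1, ∀ y ∈ Ico (0:ℝ) 1, ∀ t ∈ Icc (0:ℝ) T,
      (∫ ξ in Ioi (0:ℝ),
        (x * (Ico (0:ℝ) (w x t)).indicator (fun _ => (1:ℝ)) ξ
          - y * (Ico (0:ℝ) (w y t)).indicator (fun _ => (1:ℝ)) ξ) ^ 2)
        ≤ C * |x - y| := by
  refine ⟨2 * R, by positivity, ?_⟩
  intro x hx y hy t ht
  have hx1 : x ∈ Icc (0:ℝ) 1 := ⟨hx.1, hx.2.le⟩
  have hy1 : y ∈ Icc (0:ℝ) 1 := ⟨hy.1, hy.2.le⟩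
  -- Lipschitz bound from the MVT
  have lip : ∀ u ∈ Icc (0:ℝ) 1, ∀ v ∈ Icc (0:ℝ) 1, |w u t - w v t| ≤ R * |u - v| := by
    intro u hu v hv
    have := (convex_Icc (0:ℝ) 1).norm_image_sub_le_of_norm_hasDerivWithin_le
      (f := fun z => w z t) (f' := fun z => wy z t)
      (fun z hz => (hderiv t ht z).hasDerivWithinAt)
      (fun z hz => by simpa using (hbd z hz t ht).2) hv hu
    simpa [Real.norm_eq_abs] using this
  have habs : |x - y| ≤ 1 := by
    rw [abs_le]; constructor <;> [linarith [hx1.1, hx1.2, hy1.1, hy1.2];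
      linarith [hx1.1, hx1.2, hy1.1, hy1.2]]
  have hsq : (x - y)^2 ≤ |x - y| := by
    nlinarith [sq_abs (x - y), abs_nonneg (x - y)]
  rcases le_total (w x t) (w y t) with hab | hab
  · have h0 := stmt_12_aux (w x t) (w y t) x y (hwn x t) hab
    have hR1 : w x t ≤ R := (hbd x hx1 t ht).1
    have hlip := lip y hy1 x hx1
    rw [abs_sub_comm y x] at hlip
    have hle : w y t - w x t ≤ R * |x - y| :=
      le_trans (le_abs_self _) hlip
    have hy2 : y^2 ≤ 1 := by nlinarith [hy1.1, hy1.2]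
    calc (∫ ξ in Ioi (0:ℝ),
        (x * (Ico (0:ℝ) (w x t)).indicator (fun _ => (1:ℝ)) ξ
          - y * (Ico (0:ℝ) (w y t)).indicator (fun _ => (1:ℝ)) ξ) ^ 2)
        ≤ (x - y)^2 * (w x t) + y^2 * (w y t - w x t) := h0
      _ ≤ 2 * R * |x - y| := by
          nlinarith [abs_nonneg (x - y), hwn x t, sub_nonneg.2 hab, sq_nonneg (x - y),
            sq_nonneg y, mul_nonneg (sq_nonneg y) (sub_nonneg.2 hab)]
  · have h0 := stmt_12_aux (w y t) (w x t) y x (hwn y t) hab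
    have hsw : (∫ ξ in Ioi (0:ℝ),
        (x * (Ico (0:ℝ) (w x t)).indicator (fun _ => (1:ℝ)) ξ
          - y * (Ico (0:ℝ) (w y t)).indicator (fun _ => (1:ℝ)) ξ) ^ 2)
        = ∫ ξ in Ioi (0:ℝ),
        (y * (Ico (0:ℝ) (w y t)).indicator (fun _ => (1:ℝ)) ξ
          - x * (Ico (0:ℝ) (w x t)).indicator (fun _ => (1:ℝ)) ξ) ^ 2 := by
      apply integral_congr_ae
      apply Filter.Eventually.of_forall
      intro ξ
      ring
    rw [hsw]
    have hR1 : w y t ≤ R := (hbd y hy1 t ht).1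
    have hlip := lip x hx1 y hy1
    have hle : w x t - w y t ≤ R * |x - y| := by
      calc w x t - w y t ≤ |w x t - w y t| := le_abs_self _
        _ ≤ R * |x - y| := hlip
    have hx2 : x^2 ≤ 1 := by nlinarith [hx1.1, hx1.2]
    have hsq' : (y - x)^2 ≤ |x - y| := by rwa [show (y - x)^2 = (x - y)^2 by ring]
    calc (∫ ξ in Ioi (0:ℝ),
        (y * (Ico (0:ℝ) (w y t)).indicator (fun _ => (1:ℝ)) ξ
          - x * (Ico (0:ℝ) (w x t)).indicator (fun _ => (1:ℝ)) ξ) ^ 2)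
        ≤ (y - x)^2 * (w y t) + x^2 * (w x t - w y t) := h0
      _ ≤ 2 * R * |x - y| := by
          nlinarith [abs_nonneg (x - y), hwn y t, sub_nonneg.2 hab, sq_nonneg (y - x),
            sq_nonneg x, mul_nonneg (sq_nonneg x) (sub_nonneg.2 hab)]
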